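/- Let γ > 1 and let π^ε ∈ C^∞([0,T−ε] × 𝕋ⁿ). For δ ≥ 0 small and t ∈ [0,T−ε], let K_*(δ,t) > 0 be determined by ∫_{𝕋ⁿ} (δ²π^ε(t,x) + K_*(δ,t))^{1/γ} dx = 1, and set ρ_δ(t,x) := (δ²π^ε(t,x) + K_*(δ,t))^{1/γ}. Then K_* is smooth in (δ,t) with K_*(0,t) = 1, and there exists a constant C = C(ε) (depending on π^ε but not on δ) such that for all sufficiently small δ > 0: ‖K_*(δ,·) − 1‖_{C⁰([0,T−ε])} ≤ Cδ, ‖∂_t K_*(δ,·)‖_{C⁰([0,T−ε])} ≤ Cδ, and ‖ρ_δ − 1‖_{C⁰([0,T−ε]×𝕋ⁿ)} + ‖∂_t ρ_δ‖_{L^∞([0,T−ε]×𝕋ⁿ)} + ‖∂_t² ρ_δ‖_{L^∞([0,T−ε]×𝕋ⁿ)} ≤ Cδ. -/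

import Mathlib

open MeasureTheory Filter

noncomputable section

/-- The unit cube `[0,1]ⁿ ⊆ ℝⁿ`, a fundamental domain for the torus `𝕋ⁿ = ℝⁿ/ℤⁿ`
(normalized to have total measure one). -/
def cube (n : ℕ) : Set (Fin n → ℝ) := Set.Icc 0 1

/-- `ℤⁿ`-periodicity: a function on `ℝⁿ` descends to the torus `𝕋ⁿ = ℝⁿ/ℤⁿ`. -/
def ZPer {n : ℕ} {E : Type*} (f : (Fin n → ℝ) → E) : Prop :=
  ∀ (x : Fin n → ℝ) (i : Fin n), f (x + Pi.single i 1) = f x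

/-- Spatial partial derivative `∂ᵢ f (x)` of a scalar function on `ℝⁿ`. -/
def pd {n : ℕ} (f : (Fin n → ℝ) → ℝ) (x : Fin n → ℝ) (i : Fin n) : ℝ :=
  fderiv ℝ f x (Pi.single i 1)

/-- The `n × n` identity matrix. -/
def idM (n : ℕ) : Fin n → Fin n → ℝ := fun i j => if i = j then 1 else 0

/-- Symmetry of an `n × n` matrix. -/
def symmM {n : ℕ} (A : Fin n → Fin n → ℝ) : Prop := ∀ i j, A i j = A j i

/-- Trace of an `n × n` matrix. -/
def traceM {n : ℕ} (A : Fin n → Fin n → ℝ) : ℝ := ∑ i, A i i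

/-- Positive definiteness of an `n × n` matrix. -/
def posdefM {n : ℕ} (A : Fin n → Fin n → ℝ) : Prop :=
  ∀ ξ : Fin n → ℝ, ξ ≠ 0 → 0 < ∑ i, ∑ j, ξ i * A i j * ξ j

/-- Positive semidefiniteness of an `n × n` matrix. -/
def possemidefM {n : ℕ} (A : Fin n → Fin n → ℝ) : Prop :=
  ∀ ξ : Fin n → ℝ, 0 ≤ ∑ i, ∑ j, ξ i * A i j * ξ j


section Aux
open Metric Topology
open scoped ContDiff

lemma cube_compact (n : ℕ) : IsCompact (cube n) := isCompact_Icc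
lemma cube_meas (n : ℕ) : MeasurableSet (cube n) := measurableSet_Icc

lemma cube_vol (n : ℕ) : (volume (cube n)) = 1 := by
  rw [cube, Real.volume_Icc_pi]
  simp

instance cube_prob (n : ℕ) :
    IsProbabilityMeasure ((volume : Measure (Fin n → ℝ)).restrict (cube n)) := by
  constructor
  rw [Measure.restrict_apply_univ, cube_vol]

lemma slice_cont {X Y : Type*} [TopologicalSpace X] [TopologicalSpace Y]
    {E : Type*} [TopologicalSpace E] {s : Set E} {F : E × X → Y}
    (hF : ContinuousOn F (s ×ˢ Set.univ)) {q : E} (hq : q ∈ s) :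
    ContinuousOn (fun x => F (q, x)) Set.univ := by
  apply hF.comp (Continuous.continuousOn (by fun_prop))
  intro x _
  exact ⟨hq, trivial⟩

lemma slice_integrable {Y : Type*} [NormedAddCommGroup Y]
    {E : Type*} [TopologicalSpace E] {s : Set E} {n : ℕ} {F : E × (Fin n → ℝ) → Y}
    (hF : ContinuousOn F (s ×ˢ Set.univ)) {q : E} (hq : q ∈ s) :
    Integrable (fun x => F (q, x)) ((volume : Measure (Fin n → ℝ)).restrict (cube n)) := by
  exact ContinuousOn.integrableOn_compact (μ := volume) (cube_compact n)
    ((slice_cont hF hq).mono (Set.subset_univ (cube n)))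

theorem paramCD {E : Type} [NormedAddCommGroup E] [NormedSpace ℝ E] [FiniteDimensional ℝ E]
    (n : ℕ) {s : Set E} (hs : IsOpen s) (k : ℕ) :
    ∀ {Y : Type} [NormedAddCommGroup Y] [NormedSpace ℝ Y] [CompleteSpace Y]
      (F : E × (Fin n → ℝ) → Y),
      ContDiffOn ℝ ∞ F (s ×ˢ Set.univ) →
      ContDiffOn ℝ (k : ℕ) (fun p => ∫ x in cube n, F (p, x)) s := by
  induction k with
  | zero =>
    intro Y _ _ _ F hF
    rw [CharP.cast_eq_zero, contDiffOn_zero]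
    intro p₀ hp₀
    apply ContinuousAt.continuousWithinAt
    obtain ⟨r, hr, hball⟩ := Metric.isOpen_iff.1 hs p₀ hp₀
    have hcb : closedBall p₀ (r/2) ⊆ s :=
      (closedBall_subset_ball (by linarith)).trans hball
    obtain ⟨C, hC⟩ := ((isCompact_closedBall p₀ (r/2)).prod (cube_compact n)).exists_bound_of_continuousOn
      (hF.continuousOn.mono (by intro z hz; exact ⟨hcb hz.1, trivial⟩))
    apply continuousAt_of_dominated (bound := fun _ => C)
    · filter_upwards [hs.mem_nhds hp₀] with q hq
      exact ((slice_cont hF.continuousOn hq).mono (Set.subset_univ _)).aestronglyMeasurable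
        (cube_meas n)
    · filter_upwards [closedBall_mem_nhds p₀ (by linarith : (0:ℝ) < r/2)] with q hq
      refine (ae_restrict_iff' (cube_meas n)).2 (ae_of_all _ fun x hx => ?_)
      exact hC (q, x) ⟨hq, hx⟩
    · exact integrable_const _
    · refine ae_of_all _ fun x => ?_
      have h1 : ContinuousAt F (p₀, x) :=
        hF.continuousOn.continuousAt ((hs.prod isOpen_univ).mem_nhds ⟨hp₀, trivial⟩)
      have h2 : ContinuousAt (fun q : E => (q, x)) p₀ := continuousAt_id.prodMk continuousAt_const
      exact ContinuousAt.comp (f := fun q : E => (q, x)) (x := p₀) h1 h2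
  | succ k ih =>
    intro Y _ _ _ F hF
    set D : E × (Fin n → ℝ) → (E →L[ℝ] Y) :=
      fun z => (fderiv ℝ F z).comp (ContinuousLinearMap.inl ℝ E (Fin n → ℝ)) with hDdef
    have hop : IsOpen (s ×ˢ (Set.univ : Set (Fin n → ℝ))) := hs.prod isOpen_univ
    have hfd : ContDiffOn ℝ ∞ (fderiv ℝ F) (s ×ˢ Set.univ) :=
      hF.fderiv_of_isOpen (m := ∞) hop (le_of_eq rfl)
    have hD : ContDiffOn ℝ ∞ D (s ×ˢ Set.univ) := by
      have hc : ContDiff ℝ ∞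
          (fun A : (E × (Fin n → ℝ)) →L[ℝ] Y => A.comp (ContinuousLinearMap.inl ℝ E (Fin n → ℝ))) :=
        ((ContinuousLinearMap.compL ℝ E (E × (Fin n → ℝ)) Y).flip
          (ContinuousLinearMap.inl ℝ E (Fin n → ℝ))).contDiff
      exact hc.comp_contDiffOn hfd
    have key : ∀ p ∈ s, HasFDerivAt (fun p => ∫ x in cube n, F (p, x))
        (∫ x in cube n, D (p, x)) p := by
      intro p hp
      obtain ⟨r, hr, hball⟩ := Metric.isOpen_iff.1 hs p hp
      have hcb : closedBall p (r/2) ⊆ s :=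
        (closedBall_subset_ball (by linarith)).trans hball
      obtain ⟨C, hC⟩ := ((isCompact_closedBall p (r/2)).prod (cube_compact n)).exists_bound_of_continuousOn
        (hD.continuousOn.mono (by intro z hz; exact ⟨hcb hz.1, trivial⟩))
      apply hasFDerivAt_integral_of_dominated_of_fderiv_le (bound := fun _ => C)
        (F := fun q x => F (q, x)) (F' := fun q x => D (q, x))
        (s := ball p (r/2)) (ball_mem_nhds p (by linarith))
      · filter_upwards [hs.mem_nhds hp] with q hq
        exact ((slice_cont hF.continuousOn hq).mono (Set.subset_univ _)).aestronglyMeasurable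
          (cube_meas n)
      · exact slice_integrable hF.continuousOn hp
      · exact ((slice_cont hD.continuousOn hp).mono (Set.subset_univ _)).aestronglyMeasurable
          (cube_meas n)
      · refine (ae_restrict_iff' (cube_meas n)).2 (ae_of_all _ fun x hx => ?_)
        intro q hq
        exact hC (q, x) ⟨ball_subset_closedBall hq, hx⟩
      · exact integrable_const _
      · refine ae_of_all _ fun x q hq => ?_
        have hqs : q ∈ s := hcb (ball_subset_closedBall hq)
        have hdF : DifferentiableAt ℝ F (q, x) :=
          (hF.contDiffAt (hop.mem_nhds ⟨hqs, trivial⟩)).differentiableAt (by simp)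
        exact hdF.hasFDerivAt.comp q (hasFDerivAt_prodMk_left q x)
    have hD' : ContDiffOn ℝ (k : ℕ) (fun p => ∫ x in cube n, D (p, x)) s := ih D hD
    have hcast : ((k + 1 : ℕ) : WithTop ℕ∞) = (k : ℕ) + 1 := by exact_mod_cast rfl
    rw [hcast, contDiffOn_succ_iff_fderiv_of_isOpen hs]
    refine ⟨fun p hp => ((key p hp).differentiableAt).differentiableWithinAt, by simp, ?_⟩
    exact hD'.congr fun p hp => (key p hp).fderiv

theorem paramCD_top {E : Type} [NormedAddCommGroup E] [NormedSpace ℝ E] [FiniteDimensional ℝ E]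
    (n : ℕ) {s : Set E} (hs : IsOpen s)
    {Y : Type} [NormedAddCommGroup Y] [NormedSpace ℝ Y] [CompleteSpace Y]
    (F : E × (Fin n → ℝ) → Y)
    (hF : ContDiffOn ℝ ∞ F (s ×ˢ Set.univ)) :
    ContDiffOn ℝ ∞ (fun p => ∫ x in cube n, F (p, x)) s :=
  contDiffOn_infty.2 fun k => paramCD n hs k F hF

lemma ZPer.sub {n : ℕ} {E : Type*} {f : (Fin n → ℝ) → E} (hf : ZPer f)
    (x : Fin n → ℝ) (i : Fin n) : f (x - Pi.single i 1) = f x := by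
  have := hf (x - Pi.single i 1) i
  rw [sub_add_cancel] at this
  exact this.symm

lemma ZPer.rsmul {n : ℕ} {E : Type*} {f : (Fin n → ℝ) → E} (hf : ZPer f)
    (m : ℤ) (i : Fin n) : ∀ x : Fin n → ℝ, f (x + (m : ℝ) • (Pi.single i 1 : Fin n → ℝ)) = f x := by
  induction m using Int.induction_on with
  | zero => simp
  | succ m ih =>
    intro x
    have h1 : x + ((m : ℝ) + 1) • (Pi.single i 1 : Fin n → ℝ) =
        (x + (m : ℝ) • (Pi.single i 1 : Fin n → ℝ)) + (Pi.single i 1 : Fin n → ℝ) := by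
      rw [add_smul, one_smul, add_assoc]
    push_cast at ih ⊢
    rw [h1, hf, ih]
  | pred m ih =>
    intro x
    have h1 : x + (-(m : ℝ) - 1) • (Pi.single i 1 : Fin n → ℝ) =
        (x + (-(m:ℝ)) • (Pi.single i 1 : Fin n → ℝ)) - (Pi.single i 1 : Fin n → ℝ) := by
      rw [sub_smul, one_smul, add_sub_assoc]
    push_cast at ih ⊢
    rw [h1, hf.sub, ih]

lemma ZPer.intvec {n : ℕ} {E : Type*} {f : (Fin n → ℝ) → E} (hf : ZPer f)
    (m : Fin n → ℤ) (x : Fin n → ℝ) : f (x + fun i => (m i : ℝ)) = f x := by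
  have key : ∀ s : Finset (Fin n),
      f (x + ∑ i ∈ s, (m i : ℝ) • (Pi.single i 1 : Fin n → ℝ)) = f x := by
    intro s
    induction s using Finset.induction_on with
    | empty => simp
    | insert j s' hnotmem ih =>
      rw [Finset.sum_insert hnotmem, add_comm ((m j : ℝ) • (Pi.single j 1 : Fin n → ℝ)), ← add_assoc,
        hf.rsmul, ih]
  have h2 : (fun i => (m i : ℝ)) = ∑ i ∈ Finset.univ, (m i : ℝ) • (Pi.single i 1 : Fin n → ℝ) := by
    funext j
    rw [Finset.sum_apply]
    simp [Pi.single_apply]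
  rw [h2]
  exact key Finset.univ

/-- Reduction of an arbitrary point to the unit cube. -/
lemma cube_reduce {n : ℕ} (x : Fin n → ℝ) :
    ∃ y ∈ cube n, ∀ {E : Type} (f : (Fin n → ℝ) → E), ZPer f → f x = f y := by
  refine ⟨fun i => Int.fract (x i), ?_, ?_⟩
  · constructor
    · intro i
      exact Int.fract_nonneg _
    · intro i
      exact le_of_lt (Int.fract_lt_one _)
  · intro E f hf
    have hx : x = (fun i => Int.fract (x i)) + fun i => ((⌊x i⌋ : ℤ) : ℝ) := by
      funext i
      exact (Int.fract_add_floor (x i)).symm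
    conv_lhs => rw [hx]
    exact hf.intvec _ _

lemma one_le_inf : (∞ : WithTop ℕ∞) ≠ 0 := by simp

lemma rpow_gap {α : ℝ} (hα : 0 < α) (hα1 : α ≤ 1) {u v : ℝ} (hu : 1/8 ≤ u) (huv : u ≤ v)
    (hv : v ≤ 5) : α * 5 ^ (α - 1) * (v - u) ≤ v ^ α - u ^ α := by
  rcases eq_or_lt_of_le huv with h | h
  · subst h
    simp
  · have hcont : ContinuousOn (fun x : ℝ => x ^ α) (Set.Icc u v) := fun x hx =>
      (Real.continuousAt_rpow_const x α (Or.inl (by nlinarith [hx.1]))).continuousWithinAt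
    have hder : ∀ x ∈ Set.Ioo u v, HasDerivAt (fun x : ℝ => x ^ α) (α * x ^ (α - 1)) x :=
      fun x hx => Real.hasDerivAt_rpow_const (Or.inl (by nlinarith [hx.1]))
    obtain ⟨c, hc, hceq⟩ := exists_hasDerivAt_eq_slope (fun x : ℝ => x ^ α)
      (fun x => α * x ^ (α - 1)) h hcont hder
    have hc0 : (0:ℝ) < c := by nlinarith [hc.1]
    have h5 : (5:ℝ) ^ (α - 1) ≤ c ^ (α - 1) :=
      Real.rpow_le_rpow_of_nonpos hc0 (le_of_lt (lt_of_lt_of_le hc.2 hv)) (by linarith)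
    have heq : v ^ α - u ^ α = α * c ^ (α - 1) * (v - u) := by
      rw [hceq, div_mul_cancel₀]
      exact ne_of_gt (sub_pos.2 h)
    rw [heq]
    have h5pos : (0:ℝ) < (5:ℝ) ^ (α - 1) := Real.rpow_pos_of_pos (by norm_num) _
    have : α * 5 ^ (α - 1) ≤ α * c ^ (α - 1) := by
      apply mul_le_mul_of_nonneg_left h5 (le_of_lt hα)
    nlinarith [this, sub_pos.2 h]

open scoped ContDiff in
lemma mvt_key {W : Type} [NormedAddCommGroup W] [NormedSpace ℝ W] {G : ℝ × W → ℝ}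
    {U : Set (ℝ × W)} (hU : IsOpen U) (hG : ∀ z ∈ U, ContDiffAt ℝ ∞ G z)
    {R : Set (ℝ × W)} (hR : IsCompact R) (hRU : R ⊆ U)
    (hseg : ∀ d δ w, (δ, w) ∈ R → d ∈ Set.Icc 0 δ → (d, w) ∈ R) :
    ∃ C, 0 < C ∧ ∀ δ w, (δ, w) ∈ R → 0 ≤ δ → |G (δ, w) - G (0, w)| ≤ C * δ := by
  classical
  set Gd : ℝ × W → ℝ := fun z => fderiv ℝ G z (1, 0) with hGddef
  have hGdcont : ContinuousOn Gd R := by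
    intro z hz
    have h1 : ContDiffAt ℝ ∞ (fderiv ℝ G) z :=
      (hG z (hRU hz)).fderiv_right (m := ∞) (le_of_eq rfl)
    have h2 : ContinuousAt (fderiv ℝ G) z := h1.continuousAt
    exact (((ContinuousLinearMap.apply ℝ ℝ ((1:ℝ), (0:W))).continuous.continuousAt).comp
      h2).continuousWithinAt
  obtain ⟨C0, hC0⟩ := hR.exists_bound_of_continuousOn hGdcont
  refine ⟨|C0| + 1, by positivity, ?_⟩
  intro δ w hmem hδ
  have hbound : ∀ d ∈ Set.Icc (0:ℝ) δ, ‖Gd (d, w)‖ ≤ |C0| + 1 := by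
    intro d hd
    have := hC0 (d, w) (hseg d δ w hmem hd)
    calc ‖Gd (d, w)‖ ≤ C0 := this
    _ ≤ |C0| + 1 := by cases abs_cases C0 <;> linarith
  have hder : ∀ d ∈ Set.Icc (0:ℝ) δ, HasDerivWithinAt (fun d => G (d, w)) (Gd (d, w))
      (Set.Icc (0:ℝ) δ) d := by
    intro d hd
    have hdiff : DifferentiableAt ℝ G (d, w) :=
      (hG _ (hRU (hseg d δ w hmem hd))).differentiableAt one_le_inf
    have hcurve : HasDerivAt (fun d : ℝ => ((d, w) : ℝ × W)) ((1:ℝ), (0:W)) d :=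
      (hasDerivAt_id d).prodMk (hasDerivAt_const d w)
    exact (hdiff.hasFDerivAt.comp_hasDerivAt d hcurve).hasDerivWithinAt
  have := Convex.norm_image_sub_le_of_norm_hasDerivWithin_le hder hbound
    (convex_Icc 0 δ) (Set.left_mem_Icc.2 hδ) (Set.right_mem_Icc.2 hδ)
  rw [Real.norm_eq_abs, Real.norm_eq_abs] at this
  calc |G (δ, w) - G (0, w)| ≤ (|C0| + 1) * |δ - 0| := this
  _ = (|C0| + 1) * δ := by rw [sub_zero, abs_of_nonneg hδ]

end Aux

open Metric Topology in
open scoped ContDiff in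
set_option maxHeartbeats 1000000 in
/-- regularity and asymptotics of the normalizing constant `K_*` and
the density `ρ_δ = (δ²π^ε + K_*)^{1/γ}`: `K_*` is smooth in `(δ,t)`, `K_*(0,t) = 1`, and
`‖K_* - 1‖ + ‖∂ₜK_*‖ + ‖ρ_δ - 1‖ + ‖∂ₜρ_δ‖ + ‖∂ₜ²ρ_δ‖ = O(δ)`. -/
theorem normalizing_constant_regularity
    (n : ℕ) (γ : ℝ) (hγ : 1 < γ) (T ε : ℝ) (hε : 0 < ε) (hεT : ε < T)
    (πε : ℝ × (Fin n → ℝ) → ℝ) (hπ : ContDiff ℝ (⊤ : ℕ∞) πε)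
    (hπ_per : ∀ t, ZPer (fun x => πε (t, x))) :
    ∃ δ₁ : ℝ, 0 < δ₁ ∧
    ∃ K : ℝ → ℝ → ℝ,
      -- `K_*(δ,t)` is determined by the unit-average condition
      (∀ δ ∈ Set.Icc (0:ℝ) δ₁, ∀ t ∈ Set.Icc (0:ℝ) (T - ε),
        0 < K δ t ∧
        (∫ x in cube n, (δ ^ 2 * πε (t, x) + K δ t) ^ (1 / γ)) = 1) ∧
      -- smoothness of `K_*` in `(δ, t)`
      ContDiffOn ℝ (⊤ : ℕ∞) (fun q : ℝ × ℝ => K q.1 q.2)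
        (Set.Icc (0:ℝ) δ₁ ×ˢ Set.Icc (0:ℝ) (T - ε)) ∧
      -- `K_*(0,t) = 1`
      (∀ t ∈ Set.Icc (0:ℝ) (T - ε), K 0 t = 1) ∧
      -- `O(δ)` bounds, with `C = C(ε)` independent of `δ`
      ∃ C : ℝ, 0 < C ∧
        ∀ δ : ℝ, 0 < δ → δ ≤ δ₁ →
          (∀ t ∈ Set.Icc (0:ℝ) (T - ε),
            |K δ t - 1| ≤ C * δ ∧ |deriv (K δ) t| ≤ C * δ) ∧
          (∀ t ∈ Set.Icc (0:ℝ) (T - ε), ∀ x : Fin n → ℝ,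
            |(δ ^ 2 * πε (t, x) + K δ t) ^ (1 / γ) - 1| ≤ C * δ ∧
            |deriv (fun s => (δ ^ 2 * πε (s, x) + K δ s) ^ (1 / γ)) t| ≤ C * δ ∧
            |deriv (fun s =>
                deriv (fun r => (δ ^ 2 * πε (r, x) + K δ r) ^ (1 / γ)) s) t|
              ≤ C * δ) := by

  classical
  set α : ℝ := 1 / γ with hαdef
  have hγ0 : (0:ℝ) < γ := by linarith
  have hα : 0 < α := by rw [hαdef]; positivity
  have hα1 : α ≤ 1 := by rw [hαdef, div_le_one hγ0]; linarith
  -- global bound on πε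
  obtain ⟨M, hM⟩ : ∃ M, ∀ t ∈ Set.Icc (-1:ℝ) T, ∀ x, |πε (t, x)| ≤ M := by
    obtain ⟨M, hM⟩ := ((isCompact_Icc (a := (-1:ℝ)) (b := T)).prod
      (cube_compact n)).exists_bound_of_continuousOn (hπ.continuous.continuousOn)
    refine ⟨M, fun t ht x => ?_⟩
    obtain ⟨y, hy, hEq⟩ := cube_reduce x
    rw [hEq (fun x => πε (t, x)) (hπ_per t)]
    have := hM (t, y) ⟨ht, hy⟩
    rwa [Real.norm_eq_abs] at this
  set δ₂ : ℝ := 1 / (3 * (|M| + 1)) with hδ₂def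
  have hδ₂pos : 0 < δ₂ := by rw [hδ₂def]; positivity
  have hδ₂third : δ₂ * (3 * (|M| + 1)) = 1 := by
    rw [hδ₂def]; field_simp
  have hδ₂le : δ₂ ≤ 1/3 := by nlinarith [abs_nonneg M, hδ₂pos]
  have hsmall : ∀ δ : ℝ, |δ| < δ₂ → ∀ t ∈ Set.Icc (-1:ℝ) T, ∀ x : Fin n → ℝ,
      δ^2 * |πε (t,x)| ≤ 1/8 := by
    intro δ hδ t ht x
    have h1 : |πε (t,x)| ≤ |M| := (hM t ht x).trans (le_abs_self M)
    have h2 : δ^2 ≤ δ₂^2 := by nlinarith [abs_nonneg δ, le_of_lt hδ, sq_abs δ]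
    nlinarith [abs_nonneg (πε (t,x)), abs_nonneg M, sq_nonneg δ, hδ₂pos]
  -- the smooth integrand
  set Fb : (ℝ × ℝ × ℝ) × (Fin n → ℝ) → ℝ :=
    fun z => z.1.2.1 ^ 2 * πε (z.1.2.2, z.2) + z.1.1 with hFbdef
  set Fi : (ℝ × ℝ × ℝ) × (Fin n → ℝ) → ℝ := fun z => Fb z ^ α with hFidef
  set Ω : Set (ℝ × ℝ × ℝ) :=
    (Set.Ioo (1/4:ℝ) 4) ×ˢ (Set.Ioo (-δ₂) δ₂) ×ˢ (Set.Ioo (-1:ℝ) T) with hΩdef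
  have hΩopen : IsOpen Ω := isOpen_Ioo.prod (isOpen_Ioo.prod isOpen_Ioo)
  have hFb_smooth : ContDiff ℝ ∞ Fb := by
    have h1 : ContDiff ℝ ∞ (fun z : (ℝ×ℝ×ℝ) × (Fin n → ℝ) => πε (z.1.2.2, z.2)) :=
      hπ.comp ((contDiff_fst.snd.snd).prodMk contDiff_snd)
    exact (((contDiff_fst.snd.fst).pow 2).mul h1).add contDiff_fst.fst
  have hFb_pos : ∀ p ∈ Ω, ∀ x : Fin n → ℝ,
      1/8 ≤ Fb (p, x) ∧ Fb (p, x) ≤ 5 ∧ p.1 - 1/8 ≤ Fb (p, x) ∧ Fb (p, x) ≤ p.1 + 1/8 := by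
    rintro ⟨k, δ, t⟩ ⟨hk, hδ, ht⟩ x
    have h8 : δ^2 * |πε (t, x)| ≤ 1/8 :=
      hsmall δ (abs_lt.2 ⟨hδ.1, hδ.2⟩) t ⟨le_of_lt ht.1, le_of_lt ht.2⟩ x
    have hle := le_abs_self (πε (t, x))
    have hge := neg_abs_le (πε (t, x))
    have hsq := sq_nonneg δ
    simp only [hFbdef]
    constructor
    · nlinarith [hk.1]
    constructor
    · nlinarith [hk.2]
    constructor
    · nlinarith
    · nlinarith
  have hFi_smooth : ContDiffOn ℝ ∞ Fi (Ω ×ˢ Set.univ) := by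
    rintro z ⟨hz1, _⟩
    have hp : 1/8 ≤ Fb z := by
      have := (hFb_pos z.1 hz1 z.2).1
      simpa using this
    have hne : Fb z ≠ 0 := by positivity
    exact ((Real.contDiffAt_rpow_const_of_ne hne).comp z
      hFb_smooth.contDiffAt).contDiffWithinAt
  set H : ℝ × ℝ × ℝ → ℝ := fun p => ∫ x in cube n, Fi (p, x) with hHdef
  have hHsm : ContDiffOn ℝ ∞ H Ω := paramCD_top n hΩopen Fi hFi_smooth
  have hIi : ∀ p ∈ Ω, Integrable (fun x => Fi (p, x))
      ((volume : Measure (Fin n → ℝ)).restrict (cube n)) :=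
    fun p hp => slice_integrable hFi_smooth.continuousOn hp
  set m0 : ℝ := α * 5 ^ (α - 1) with hm0def
  have hm0pos : 0 < m0 := mul_pos hα (Real.rpow_pos_of_pos (by norm_num) _)
  -- strict monotonicity gap of H in the K-variable
  have hHgap : ∀ p ∈ Ω, ∀ q ∈ Ω, p.2 = q.2 → p.1 ≤ q.1 →
      m0 * (q.1 - p.1) ≤ H q - H p := by
    intro p hp q hq h2 h12
    have hsub : H q - H p = ∫ x in cube n, (Fi (q, x) - Fi (p, x)) :=
      (integral_sub (hIi q hq) (hIi p hp)).symm
    rw [hsub]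
    have hmono : ∀ x : Fin n → ℝ, m0 * (q.1 - p.1) ≤ Fi (q, x) - Fi (p, x) := by
      intro x
      obtain ⟨hp1, hp5, _, _⟩ := hFb_pos p hp x
      obtain ⟨hq1, hq5, _, _⟩ := hFb_pos q hq x
      have hFbeq : Fb (q,x) - Fb (p,x) = q.1 - p.1 := by
        simp only [hFbdef, ← h2]
        ring
      have huv : Fb (p, x) ≤ Fb (q, x) := by linarith
      have := rpow_gap hα hα1 hp1 huv hq5
      rw [hFbeq] at this
      exact this
    calc m0 * (q.1 - p.1)
        = ∫ _x in cube n, m0 * (q.1 - p.1) := by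
          rw [integral_const]
          simp
      _ ≤ ∫ x in cube n, (Fi (q, x) - Fi (p, x)) :=
          integral_mono_ae (integrable_const _) ((hIi q hq).sub (hIi p hp))
            (ae_of_all _ hmono)
  -- value bounds for H
  have hHle : ∀ p ∈ Ω, H p ≤ (p.1 + 1/8) ^ α ∧ (p.1 - 1/8) ^ α ≤ H p := by
    intro p hp
    constructor
    · calc H p ≤ ∫ _x in cube n, (p.1 + 1/8) ^ α := by
            apply integral_mono_ae (hIi p hp) (integrable_const _)
            refine ae_of_all _ fun x => ?_
            obtain ⟨h1, _, _, h4⟩ := hFb_pos p hp x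
            exact Real.rpow_le_rpow (le_trans (by norm_num) h1) h4 (le_of_lt hα)
        _ = (p.1 + 1/8) ^ α := by rw [integral_const]; simp
    · calc (p.1 - 1/8) ^ α = ∫ _x in cube n, (p.1 - 1/8) ^ α := by
            rw [integral_const]; simp
        _ ≤ H p := by
            apply integral_mono_ae (integrable_const _) (hIi p hp)
            refine ae_of_all _ fun x => ?_
            obtain ⟨h1, _, h3, _⟩ := hFb_pos p hp x
            have hbase : (0:ℝ) ≤ p.1 - 1/8 := by
              have := hp.1.1
              simp only [hΩdef] at hp
              linarith [hp.1.1]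
            exact Real.rpow_le_rpow hbase h3 (le_of_lt hα)
  set Ω₂ : Set (ℝ × ℝ) := (Set.Ioo (-δ₂) δ₂) ×ˢ (Set.Ioo (-1:ℝ) T) with hΩ₂def
  have hΩ₂open : IsOpen Ω₂ := isOpen_Ioo.prod isOpen_Ioo
  have hmemΩ : ∀ k ∈ Set.Icc (1/2:ℝ) 2, ∀ q ∈ Ω₂, ((k, q.1, q.2) : ℝ×ℝ×ℝ) ∈ Ω := by
    rintro k hk ⟨δ, t⟩ hq
    exact ⟨⟨by linarith [hk.1], by linarith [hk.2]⟩, hq.1, hq.2⟩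
  -- IVT existence
  have hex : ∀ q : ℝ × ℝ, q ∈ Ω₂ → ∃ k, k ∈ Set.Icc (1/2:ℝ) 2 ∧ H (k, q.1, q.2) = 1 := by
    intro q hq
    have hcont : ContinuousOn (fun k => H (k, q.1, q.2)) (Set.Icc (1/2:ℝ) 2) := by
      apply (hHsm.continuousOn.comp (Continuous.continuousOn (by fun_prop)))
      intro k hk
      exact hmemΩ k hk q hq
    have h12 := (hHle _ (hmemΩ (1/2) (by norm_num) q hq)).1
    have hlt : ((1:ℝ)/2 + 1/8) ^ α < 1 := Real.rpow_lt_one (by norm_num) (by norm_num) hα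
    have h2' : (1:ℝ) < ((2:ℝ) - 1/8) ^ α :=
      (Real.one_lt_rpow_iff_of_pos (by norm_num)).2 (Or.inl ⟨by norm_num, hα⟩)
    have h2'' := (hHle _ (hmemΩ 2 (by norm_num) q hq)).2
    have hmem1 : (1:ℝ) ∈ Set.Icc (H (1/2, q.1, q.2)) (H (2, q.1, q.2)) := by
      constructor
      · simp only at h12 ⊢
        linarith
      · simp only at h2'' ⊢
        linarith
    obtain ⟨k, hk, hkeq⟩ := intermediate_value_Icc (by norm_num : (1/2:ℝ) ≤ 2) hcont hmem1
    exact ⟨k, hk, hkeq⟩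
  set K : ℝ → ℝ → ℝ :=
    fun δ t => if h : ((δ, t) : ℝ × ℝ) ∈ Ω₂ then (hex (δ,t) h).choose else 1 with hKdef
  have hKprop : ∀ q ∈ Ω₂, K q.1 q.2 ∈ Set.Icc (1/2:ℝ) 2 ∧ H (K q.1 q.2, q.1, q.2) = 1 := by
    rintro ⟨δ, t⟩ hq
    simp only [hKdef, dif_pos hq]
    exact (hex (δ,t) hq).choose_spec
  have hKuniq : ∀ q ∈ Ω₂, ∀ k ∈ Set.Icc (1/2:ℝ) 2, H (k, q.1, q.2) = 1 → k = K q.1 q.2 := by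
    intro q hq k hk hkeq
    obtain ⟨hKmem, hKeq⟩ := hKprop q hq
    by_contra hne
    rcases lt_or_gt_of_ne hne with h | h
    · have := hHgap (k, q.1, q.2) (hmemΩ _ hk q hq) (K q.1 q.2, q.1, q.2)
        (hmemΩ _ hKmem q hq) rfl (le_of_lt h)
      rw [hkeq, hKeq] at this
      simp only at this
      nlinarith
    · have := hHgap (K q.1 q.2, q.1, q.2) (hmemΩ _ hKmem q hq) (k, q.1, q.2)
        (hmemΩ _ hk q hq) rfl (le_of_lt h)
      rw [hkeq, hKeq] at this
      simp only at this
      nlinarith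
  have hK78 : ∀ q ∈ Ω₂, K q.1 q.2 ∈ Set.Icc (7/8:ℝ) (9/8) := by
    intro q hq
    obtain ⟨hKmem, hKeq⟩ := hKprop q hq
    have h1 := (hHle _ (hmemΩ _ hKmem q hq)).1
    have h2 := (hHle _ (hmemΩ _ hKmem q hq)).2
    simp only at h1 h2
    rw [hKeq] at h1 h2
    constructor
    · by_contra hlt
      push_neg at hlt
      have : (K q.1 q.2 + 1/8) ^ α < 1 :=
        Real.rpow_lt_one (by linarith [hKmem.1]) (by linarith) hα
      linarith
    · by_contra hlt
      push_neg at hlt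
      have : (1:ℝ) < (K q.1 q.2 - 1/8) ^ α :=
        (Real.one_lt_rpow_iff_of_pos (by linarith [hKmem.1])).2 (Or.inl ⟨by linarith, hα⟩)
      linarith
  -- smoothness of K via the inverse function theorem
  have hKsmoothAt : ∀ q ∈ Ω₂, ContDiffAt ℝ ∞ (fun q : ℝ × ℝ => K q.1 q.2) q := by
    intro q₀ hq₀
    obtain ⟨hKmem, hKeq⟩ := hKprop q₀ hq₀
    have hK78' := hK78 q₀ hq₀
    set p₀ : ℝ × ℝ × ℝ := (K q₀.1 q₀.2, q₀.1, q₀.2) with hp₀def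
    have hp₀Ω : p₀ ∈ Ω := hmemΩ _ hKmem q₀ hq₀
    have hHc : ContDiffAt ℝ ∞ H p₀ := hHsm.contDiffAt (hΩopen.mem_nhds hp₀Ω)
    have hHd : DifferentiableAt ℝ H p₀ := hHc.differentiableAt one_le_inf
    set L : ℝ × ℝ × ℝ →L[ℝ] ℝ := fderiv ℝ H p₀ with hLdef
    set a : ℝ := L (1, 0, 0) with hadef
    have hslice : HasDerivAt (fun k => H (k, q₀.1, q₀.2)) a (K q₀.1 q₀.2) := by
      have hcurve : HasDerivAt (fun k : ℝ => ((k, q₀.1, q₀.2) : ℝ×ℝ×ℝ))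
          ((1:ℝ), (0:ℝ), (0:ℝ)) (K q₀.1 q₀.2) :=
        (hasDerivAt_id _).prodMk ((hasDerivAt_const _ _).prodMk (hasDerivAt_const _ _))
      exact hHd.hasFDerivAt.comp_hasDerivAt _ hcurve
    have ha : m0 ≤ a := by
      have htend : Tendsto (slope (fun k => H (k, q₀.1, q₀.2)) (K q₀.1 q₀.2))
          (𝓝[>] (K q₀.1 q₀.2)) (𝓝 a) :=
        (hasDerivAt_iff_tendsto_slope.1 hslice).mono_left
          (nhdsWithin_mono _ (fun y hy => ne_of_gt hy))
      apply ge_of_tendsto htend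
      filter_upwards [Ioo_mem_nhdsGT_of_mem
        ⟨le_refl _, (by linarith [hK78'.2] : K q₀.1 q₀.2 < 2)⟩] with k hk
      have hgap := hHgap p₀ hp₀Ω (k, q₀.1, q₀.2)
        (hmemΩ k ⟨by linarith [hKmem.1, hk.1], le_of_lt hk.2⟩ q₀ hq₀) rfl (le_of_lt hk.1)
      rw [slope_def_field, le_div_iff₀ (by linarith [hk.1] : (0:ℝ) < k - K q₀.1 q₀.2)]
      simp only [hp₀def] at hgap
      linarith [hgap]
    have ha0 : a ≠ 0 := ne_of_gt (lt_of_lt_of_le hm0pos ha)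
    set A : ℝ × ℝ × ℝ →L[ℝ] ℝ × ℝ × ℝ :=
      L.prod (ContinuousLinearMap.snd ℝ ℝ (ℝ × ℝ)) with hAdef
    set B : ℝ × ℝ × ℝ →L[ℝ] ℝ × ℝ × ℝ :=
      (a⁻¹ • (ContinuousLinearMap.fst ℝ ℝ (ℝ × ℝ) -
        L.comp ((ContinuousLinearMap.inr ℝ ℝ (ℝ × ℝ)).comp
          (ContinuousLinearMap.snd ℝ ℝ (ℝ × ℝ))))).prod
        (ContinuousLinearMap.snd ℝ ℝ (ℝ × ℝ)) with hBdef
    have hL1 : ∀ z : ℝ × ℝ × ℝ, L z = z.1 * a + L (0, z.2) := by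
      intro z
      have hzdec : z = (z.1 • ((1:ℝ), (0:ℝ), (0:ℝ))) + ((0:ℝ), z.2) := by
        refine Prod.ext ?_ ?_ <;> simp
      calc L z = L ((z.1 • ((1:ℝ), (0:ℝ), (0:ℝ))) + ((0:ℝ), z.2)) := by rw [← hzdec]
        _ = z.1 * a + L (0, z.2) := by
            rw [map_add, L.map_smul]
            simp [hadef, smul_eq_mul]
    have hBA : Function.LeftInverse B A := by
      intro z
      refine Prod.ext ?_ ?_
      · simp only [hAdef, hBdef, ContinuousLinearMap.prod_apply,
          ContinuousLinearMap.smul_apply, ContinuousLinearMap.coe_sub',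
          ContinuousLinearMap.coe_fst', ContinuousLinearMap.coe_comp',
          ContinuousLinearMap.coe_snd', Function.comp_apply, Pi.sub_apply,
          ContinuousLinearMap.inr_apply, smul_eq_mul]
        rw [hL1 z]
        field_simp
        ring
      · simp [hAdef, hBdef]
    have hAB : Function.RightInverse B A := by
      intro y
      refine Prod.ext ?_ ?_
      · simp only [hAdef, hBdef, ContinuousLinearMap.prod_apply,
          ContinuousLinearMap.smul_apply, ContinuousLinearMap.coe_sub',
          ContinuousLinearMap.coe_fst', ContinuousLinearMap.coe_comp',
          ContinuousLinearMap.coe_snd', Function.comp_apply, Pi.sub_apply,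
          ContinuousLinearMap.inr_apply, smul_eq_mul]
        rw [hL1 (a⁻¹ * (y.1 - L (0, y.2)), y.2)]
        simp only
        field_simp
        ring
      · simp [hAdef, hBdef]
    set e : (ℝ × ℝ × ℝ) ≃L[ℝ] (ℝ × ℝ × ℝ) :=
      ContinuousLinearEquiv.equivOfInverse A B hBA hAB with hedef
    set Φ : ℝ × ℝ × ℝ → ℝ × ℝ × ℝ := fun p => (H p, p.2) with hΦdef
    have hΦc : ContDiffAt ℝ ∞ Φ p₀ := hHc.prodMk contDiff_snd.contDiffAt
    have hecoe : (e : ℝ×ℝ×ℝ →L[ℝ] ℝ×ℝ×ℝ) = A := rfl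
    have hΦd : HasFDerivAt Φ (e : ℝ×ℝ×ℝ →L[ℝ] ℝ×ℝ×ℝ) p₀ := by
      rw [hecoe, hAdef]
      exact hHd.hasFDerivAt.prodMk hasFDerivAt_snd
    set g : ℝ × ℝ × ℝ → ℝ × ℝ × ℝ := hΦc.localInverse hΦd one_le_inf with hgdef
    have hgc : ContDiffAt ℝ ∞ g (Φ p₀) := hΦc.to_localInverse hΦd one_le_inf
    have hS : HasStrictFDerivAt Φ (e : ℝ×ℝ×ℝ →L[ℝ] ℝ×ℝ×ℝ) p₀ :=
      hΦc.hasStrictFDerivAt' hΦd one_le_inf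
    have hgright : ∀ᶠ y in 𝓝 (Φ p₀), Φ (g y) = y := hS.eventually_right_inverse
    have hgp₀ : g (Φ p₀) = p₀ := hΦc.localInverse_apply_image hΦd one_le_inf
    have hΦp₀ : Φ p₀ = ((1:ℝ), q₀) := by
      simp only [hΦdef, hp₀def]
      rw [show H (K q₀.1 q₀.2, q₀.1, q₀.2) = 1 from hKeq]
    have hgcont : ContinuousAt g (Φ p₀) := hgc.continuousAt
    have hcont1 : ContinuousAt (fun q : ℝ × ℝ => (((1:ℝ), q) : ℝ × ℝ × ℝ)) q₀ := by fun_prop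
    have hcont1' : Tendsto (fun q : ℝ × ℝ => (((1:ℝ), q) : ℝ × ℝ × ℝ)) (𝓝 q₀) (𝓝 (Φ p₀)) := by
      rw [hΦp₀]
      exact hcont1
    have hev : (fun q : ℝ × ℝ => K q.1 q.2) =ᶠ[𝓝 q₀] fun q => (g (1, q)).1 := by
      have h1 : ∀ᶠ q in 𝓝 q₀, Φ (g (1, q)) = ((1:ℝ), q) :=
        hcont1'.eventually hgright
      have htends : Tendsto (fun q : ℝ×ℝ => (g ((1:ℝ), q)).1) (𝓝 q₀) (𝓝 p₀.1) := by
        have hg1 : Tendsto g (𝓝 (Φ p₀)) (𝓝 p₀) := by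
          have := hgcont.tendsto
          rwa [hgp₀] at this
        exact (continuous_fst.tendsto p₀).comp (hg1.comp hcont1')
      have h2 : ∀ᶠ q in 𝓝 q₀, (g ((1:ℝ), q)).1 ∈ Set.Ioo (1/2:ℝ) 2 := by
        apply htends
        apply isOpen_Ioo.mem_nhds
        exact ⟨by linarith [hK78'.1], by linarith [hK78'.2]⟩
      have h3 : ∀ᶠ q in 𝓝 q₀, q ∈ Ω₂ := hΩ₂open.eventually_mem hq₀
      filter_upwards [h1, h2, h3] with q hΦq hgm hqΩ
      have hH1 : H (g ((1:ℝ), q)) = 1 := congrArg Prod.fst hΦq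
      have hz2 : (g ((1:ℝ), q)).2 = q := congrArg Prod.snd hΦq
      have hz : g ((1:ℝ), q) = ((g ((1:ℝ), q)).1, q.1, q.2) := Prod.ext rfl hz2
      have hHq : H ((g ((1:ℝ), q)).1, q.1, q.2) = 1 := by rw [← hz]; exact hH1
      exact (hKuniq q hqΩ ((g ((1:ℝ), q)).1) ⟨le_of_lt hgm.1, le_of_lt hgm.2⟩ hHq).symm
    have hrhs : ContDiffAt ℝ ∞ (fun q : ℝ×ℝ => (g ((1:ℝ), q)).1) q₀ := by
      have hinner : ContDiffAt ℝ ∞ (fun q : ℝ×ℝ => (((1:ℝ), q) : ℝ×ℝ×ℝ)) q₀ :=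
        (contDiff_const.prodMk contDiff_id).contDiffAt
      have hgq : ContDiffAt ℝ ∞ g (((1:ℝ), q₀) : ℝ×ℝ×ℝ) := by
        rw [← hΦp₀]
        exact hgc
      exact contDiff_fst.contDiffAt.comp q₀ (hgq.comp q₀ hinner)
    exact hrhs.congr_of_eventuallyEq hev
  -- K(0,t) = 1
  have hK0 : ∀ t ∈ Set.Ioo (-1:ℝ) T, K 0 t = 1 := by
    intro t ht
    have hq : (((0:ℝ), t) : ℝ × ℝ) ∈ Ω₂ := ⟨⟨by simp [neg_lt_zero, hδ₂pos], by simp [hδ₂pos]⟩, ht⟩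
    have hH1 : H (1, 0, t) = 1 := by
      have hfun : (fun x : Fin n → ℝ => Fi (((1:ℝ),(0:ℝ),t), x)) = fun _ => (1:ℝ) := by
        funext x
        simp only [hFidef, hFbdef]
        norm_num [Real.one_rpow]
      simp only [hHdef]
      rw [show (∫ x in cube n, Fi (((1:ℝ),(0:ℝ),t), x)) = ∫ _x in cube n, (1:ℝ) from by
        rw [hfun]]
      rw [integral_const]
      simp
    exact (hKuniq ((0:ℝ), t) hq 1 ⟨by norm_num, by norm_num⟩ hH1).symm
  set δ₁ : ℝ := δ₂ / 2 with hδ₁def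
  have hδ₁pos : 0 < δ₁ := by rw [hδ₁def]; positivity
  set R2 : Set (ℝ × ℝ) := Set.Icc (0:ℝ) δ₁ ×ˢ Set.Icc (0:ℝ) (T - ε) with hR2def
  have hR2sub : R2 ⊆ Ω₂ := by
    rintro ⟨δ, t⟩ ⟨hδ, ht⟩
    refine ⟨⟨by linarith [hδ.1, hδ₂pos], by linarith [hδ.2, hδ₂pos]⟩,
      ⟨by linarith [ht.1], by linarith [ht.2]⟩⟩
  have hR2c : IsCompact R2 := isCompact_Icc.prod isCompact_Icc
  have hseg2 : ∀ d δ w, ((δ, w) : ℝ × ℝ) ∈ R2 → d ∈ Set.Icc 0 δ → ((d, w) : ℝ × ℝ) ∈ R2 := by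
    rintro d δ w ⟨hδ, hw⟩ hd
    exact ⟨⟨hd.1, le_trans hd.2 hδ.2⟩, hw⟩
  set K1 : ℝ × ℝ → ℝ :=
    fun q => fderiv ℝ (fun q : ℝ × ℝ => K q.1 q.2) q (((0:ℝ), (1:ℝ)) : ℝ × ℝ) with hK1def
  have hK1smoothAt : ∀ q ∈ Ω₂, ContDiffAt ℝ ∞ K1 q := by
    intro q hq
    exact ((ContinuousLinearMap.apply ℝ ℝ (((0:ℝ), (1:ℝ)) : ℝ × ℝ)).contDiff.contDiffAt).comp q
      ((hKsmoothAt q hq).fderiv_right (m := ∞) (le_of_eq rfl))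
  have hKslice : ∀ q ∈ Ω₂, HasDerivAt (fun s => K q.1 s) (K1 q) q.2 := by
    intro q hq
    have hd : DifferentiableAt ℝ (fun q : ℝ × ℝ => K q.1 q.2) q :=
      (hKsmoothAt q hq).differentiableAt one_le_inf
    have hcurve : HasDerivAt (fun s : ℝ => ((q.1, s) : ℝ × ℝ)) (((0:ℝ), (1:ℝ)) : ℝ × ℝ) q.2 :=
      (hasDerivAt_const _ _).prodMk (hasDerivAt_id _)
    exact hd.hasFDerivAt.comp_hasDerivAt q.2 hcurve
  have hK1zero : ∀ t ∈ Set.Ioo (-1:ℝ) T, K1 (0, t) = 0 := by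
    intro t ht
    have hq : (((0:ℝ), t) : ℝ × ℝ) ∈ Ω₂ := ⟨⟨by simp [neg_lt_zero, hδ₂pos], by simp [hδ₂pos]⟩, ht⟩
    have h0 := (hKslice ((0:ℝ), t) hq).deriv
    have hconst : (fun s => K 0 s) =ᶠ[𝓝 t] (fun _ => (1:ℝ)) := by
      filter_upwards [isOpen_Ioo.eventually_mem ht] with s hs
      exact hK0 s hs
    rw [← h0, hconst.deriv_eq, deriv_const]
  obtain ⟨C1, hC1pos, hC1⟩ := mvt_key hΩ₂open hKsmoothAt hR2c hR2sub hseg2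
  obtain ⟨C2, hC2pos, hC2⟩ := mvt_key hΩ₂open hK1smoothAt hR2c hR2sub hseg2
  -- the density function and its time derivatives
  set P : ℝ × ℝ × (Fin n → ℝ) → ℝ :=
    fun z => (z.1 ^ 2 * πε (z.2.1, z.2.2) + K z.1 z.2.1) ^ α with hPdef
  set Ω₄ : Set (ℝ × ℝ × (Fin n → ℝ)) :=
    (fun z : ℝ × ℝ × (Fin n → ℝ) => ((z.1, z.2.1) : ℝ × ℝ)) ⁻¹' Ω₂ with hΩ₄def
  have hΩ₄open : IsOpen Ω₄ := hΩ₂open.preimage (by fun_prop)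
  have hPsmoothAt : ∀ z ∈ Ω₄, ContDiffAt ℝ ∞ P z := by
    intro z hz
    have h1 : ContDiffAt ℝ ∞ (fun z : ℝ × ℝ × (Fin n → ℝ) => πε (z.2.1, z.2.2)) z :=
      hπ.contDiffAt.comp z contDiff_snd.contDiffAt
    have h2 : ContDiffAt ℝ ∞ (fun z : ℝ × ℝ × (Fin n → ℝ) => K z.1 z.2.1) z := by
      have hproj : ContDiffAt ℝ ∞ (fun z : ℝ × ℝ × (Fin n → ℝ) => ((z.1, z.2.1) : ℝ × ℝ)) z :=
        (contDiff_fst.prodMk contDiff_snd.fst).contDiffAt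
      exact (hKsmoothAt (z.1, z.2.1) hz).comp z hproj
    have hbase : ContDiffAt ℝ ∞
        (fun z : ℝ × ℝ × (Fin n → ℝ) => z.1 ^ 2 * πε (z.2.1, z.2.2) + K z.1 z.2.1) z :=
      (((contDiff_fst.pow 2).contDiffAt).mul h1).add h2
    have hz2 : ((z.1, z.2.1) : ℝ × ℝ) ∈ Ω₂ := hz
    have hpos : 0 < z.1 ^ 2 * πε (z.2.1, z.2.2) + K z.1 z.2.1 := by
      have h8 : z.1 ^ 2 * |πε (z.2.1, z.2.2)| ≤ 1/8 :=
        hsmall z.1 (abs_lt.2 ⟨hz2.1.1, hz2.1.2⟩) z.2.1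
          ⟨le_of_lt hz2.2.1, le_of_lt hz2.2.2⟩ z.2.2
      have hK78'' := hK78 (z.1, z.2.1) hz2
      simp only at hK78''
      nlinarith [neg_abs_le (πε (z.2.1, z.2.2)), sq_nonneg z.1, hK78''.1]
    exact (Real.contDiffAt_rpow_const_of_ne (ne_of_gt hpos)).comp z hbase
  set P1 : ℝ × ℝ × (Fin n → ℝ) → ℝ :=
    fun z => fderiv ℝ P z (((0:ℝ), (1:ℝ), (0 : Fin n → ℝ))) with hP1def
  have hP1smoothAt : ∀ z ∈ Ω₄, ContDiffAt ℝ ∞ P1 z := by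
    intro z hz
    exact ((ContinuousLinearMap.apply ℝ ℝ
        (((0:ℝ), (1:ℝ), (0 : Fin n → ℝ)))).contDiff.contDiffAt).comp z
      ((hPsmoothAt z hz).fderiv_right (m := ∞) (le_of_eq rfl))
  set P2 : ℝ × ℝ × (Fin n → ℝ) → ℝ :=
    fun z => fderiv ℝ P1 z (((0:ℝ), (1:ℝ), (0 : Fin n → ℝ))) with hP2def
  have hP2smoothAt : ∀ z ∈ Ω₄, ContDiffAt ℝ ∞ P2 z := by
    intro z hz
    have hfd : ContDiffAt ℝ ∞ (fderiv ℝ P1) z := by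
      apply ContDiffAt.fderiv_right (m := ∞) ?_ (le_of_eq rfl)
      exact (hP1smoothAt z hz).congr_of_eventuallyEq (by rfl)
    exact ((ContinuousLinearMap.apply ℝ ℝ
        (((0:ℝ), (1:ℝ), (0 : Fin n → ℝ)))).contDiff.contDiffAt).comp z hfd
  have hPslice : ∀ z ∈ Ω₄, HasDerivAt (fun s => P (z.1, s, z.2.2)) (P1 z) z.2.1 := by
    intro z hz
    have hd : DifferentiableAt ℝ P z := (hPsmoothAt z hz).differentiableAt one_le_inf
    have hcurve : HasDerivAt (fun s : ℝ => ((z.1, s, z.2.2) : ℝ × ℝ × (Fin n → ℝ)))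
        (((0:ℝ), (1:ℝ), (0 : Fin n → ℝ))) z.2.1 :=
      (hasDerivAt_const _ _).prodMk ((hasDerivAt_id _).prodMk (hasDerivAt_const _ _))
    exact hd.hasFDerivAt.comp_hasDerivAt z.2.1 hcurve
  have hP1slice : ∀ z ∈ Ω₄, HasDerivAt (fun s => P1 (z.1, s, z.2.2)) (P2 z) z.2.1 := by
    intro z hz
    have hd : DifferentiableAt ℝ P1 z := (hP1smoothAt z hz).differentiableAt one_le_inf
    have hcurve : HasDerivAt (fun s : ℝ => ((z.1, s, z.2.2) : ℝ × ℝ × (Fin n → ℝ)))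
        (((0:ℝ), (1:ℝ), (0 : Fin n → ℝ))) z.2.1 :=
      (hasDerivAt_const _ _).prodMk ((hasDerivAt_id _).prodMk (hasDerivAt_const _ _))
    exact hd.hasFDerivAt.comp_hasDerivAt z.2.1 hcurve
  have hP0 : ∀ t ∈ Set.Ioo (-1:ℝ) T, ∀ x : Fin n → ℝ, P (0, t, x) = 1 := by
    intro t ht x
    simp only [hPdef]
    rw [hK0 t ht]
    norm_num [Real.one_rpow]
  have hP1zero : ∀ t ∈ Set.Ioo (-1:ℝ) T, ∀ x : Fin n → ℝ, P1 (0, t, x) = 0 := by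
    intro t ht x
    have hq : (((0:ℝ), t) : ℝ × ℝ) ∈ Ω₂ := ⟨⟨by simp [neg_lt_zero, hδ₂pos], by simp [hδ₂pos]⟩, ht⟩
    have h0 := (hPslice ((0:ℝ), t, x) hq).deriv
    have hconst : (fun s => P (0, s, x)) =ᶠ[𝓝 t] (fun _ => (1:ℝ)) := by
      filter_upwards [isOpen_Ioo.eventually_mem ht] with s hs
      exact hP0 s hs x
    rw [← h0, hconst.deriv_eq, deriv_const]
  have hP2zero : ∀ t ∈ Set.Ioo (-1:ℝ) T, ∀ x : Fin n → ℝ, P2 (0, t, x) = 0 := by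
    intro t ht x
    have hq : (((0:ℝ), t) : ℝ × ℝ) ∈ Ω₂ := ⟨⟨by simp [neg_lt_zero, hδ₂pos], by simp [hδ₂pos]⟩, ht⟩
    have h0 := (hP1slice ((0:ℝ), t, x) hq).deriv
    have hconst : (fun s => P1 (0, s, x)) =ᶠ[𝓝 t] (fun _ => (0:ℝ)) := by
      filter_upwards [isOpen_Ioo.eventually_mem ht] with s hs
      exact hP1zero s hs x
    rw [← h0, hconst.deriv_eq, deriv_const]
  set R3 : Set (ℝ × ℝ × (Fin n → ℝ)) :=
    Set.Icc (0:ℝ) δ₁ ×ˢ (Set.Icc (0:ℝ) (T - ε) ×ˢ cube n) with hR3def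
  have hR3c : IsCompact R3 := isCompact_Icc.prod (isCompact_Icc.prod (cube_compact n))
  have hR3sub : R3 ⊆ Ω₄ := by
    rintro ⟨δ, t, x⟩ ⟨hδ, ht, _⟩
    exact hR2sub ⟨hδ, ht⟩
  have hseg3 : ∀ d δ w, ((δ, w) : ℝ × (ℝ × (Fin n → ℝ))) ∈ R3 → d ∈ Set.Icc 0 δ →
      ((d, w) : ℝ × (ℝ × (Fin n → ℝ))) ∈ R3 := by
    rintro d δ w ⟨hδ, hw⟩ hd
    exact ⟨⟨hd.1, le_trans hd.2 hδ.2⟩, hw⟩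
  obtain ⟨C3, hC3pos, hC3⟩ := mvt_key hΩ₄open hPsmoothAt hR3c hR3sub hseg3
  obtain ⟨C4, hC4pos, hC4⟩ := mvt_key hΩ₄open hP1smoothAt hR3c hR3sub hseg3
  obtain ⟨C5, hC5pos, hC5⟩ := mvt_key hΩ₄open hP2smoothAt hR3c hR3sub hseg3
  refine ⟨δ₁, hδ₁pos, K, ?_, ?_, ?_, ?_⟩
  · intro δ hδ t ht
    have hq : ((δ, t) : ℝ × ℝ) ∈ Ω₂ := hR2sub ⟨hδ, ht⟩
    exact ⟨by linarith [(hK78 (δ, t) hq).1], (hKprop (δ, t) hq).2⟩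
  · exact fun q hq => (hKsmoothAt q (hR2sub hq)).contDiffWithinAt
  · intro t ht
    exact hK0 t ⟨by linarith [ht.1], by linarith [ht.2]⟩
  · refine ⟨C1 + C2 + C3 + C4 + C5, by positivity, ?_⟩
    intro δ hδpos hδle
    constructor
    · intro t ht
      have hqR : ((δ, t) : ℝ × ℝ) ∈ R2 := ⟨⟨le_of_lt hδpos, hδle⟩, ht⟩
      have hq : ((δ, t) : ℝ × ℝ) ∈ Ω₂ := hR2sub hqR
      have htIoo : t ∈ Set.Ioo (-1:ℝ) T := ⟨by linarith [ht.1], by linarith [ht.2]⟩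
      constructor
      · have h1 : |K δ t - K 0 t| ≤ C1 * δ := hC1 δ t hqR (le_of_lt hδpos)
        rw [hK0 t htIoo] at h1
        calc |K δ t - 1| ≤ C1 * δ := h1
          _ ≤ (C1 + C2 + C3 + C4 + C5) * δ := by nlinarith
      · have hde : deriv (K δ) t = K1 (δ, t) := (hKslice (δ, t) hq).deriv
        rw [hde]
        have h1 : |K1 (δ, t) - K1 (0, t)| ≤ C2 * δ := hC2 δ t hqR (le_of_lt hδpos)
        rw [hK1zero t htIoo, sub_zero] at h1
        calc |K1 (δ, t)| ≤ C2 * δ := h1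
          _ ≤ (C1 + C2 + C3 + C4 + C5) * δ := by nlinarith
    · intro t ht x
      obtain ⟨y, hy, hEq⟩ := cube_reduce x
      have hπxy : ∀ s, πε (s, x) = πε (s, y) := fun s => hEq (fun x => πε (s, x)) (hπ_per s)
      have hqR : ((δ, t) : ℝ × ℝ) ∈ R2 := ⟨⟨le_of_lt hδpos, hδle⟩, ht⟩
      have hq : ((δ, t) : ℝ × ℝ) ∈ Ω₂ := hR2sub hqR
      have hzR : ((δ, t, y) : ℝ × ℝ × (Fin n → ℝ)) ∈ R3 := ⟨⟨le_of_lt hδpos, hδle⟩, ht, hy⟩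
      have htIoo : t ∈ Set.Ioo (-1:ℝ) T := ⟨by linarith [ht.1], by linarith [ht.2]⟩
      have hfun1 : (fun s => (δ ^ 2 * πε (s, x) + K δ s) ^ α) = fun s => P (δ, s, y) := by
        funext s
        simp only [hPdef]
        rw [hπxy s]
      refine ⟨?_, ?_, ?_⟩
      · have h1' : (δ ^ 2 * πε (t, x) + K δ t) ^ α = P (δ, t, y) := by
          simp only [hPdef]
          rw [hπxy t]
        rw [h1']
        have h1 : |P (δ, t, y) - P (0, t, y)| ≤ C3 * δ := hC3 δ (t, y) hzR (le_of_lt hδpos)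
        rw [hP0 t htIoo y] at h1
        calc |P (δ, t, y) - 1| ≤ C3 * δ := h1
          _ ≤ (C1 + C2 + C3 + C4 + C5) * δ := by nlinarith
      · rw [hfun1]
        have hde : deriv (fun s => P (δ, s, y)) t = P1 (δ, t, y) := (hPslice (δ, t, y) hq).deriv
        rw [hde]
        have h1 : |P1 (δ, t, y) - P1 (0, t, y)| ≤ C4 * δ := hC4 δ (t, y) hzR (le_of_lt hδpos)
        rw [hP1zero t htIoo y, sub_zero] at h1
        calc |P1 (δ, t, y)| ≤ C4 * δ := h1
          _ ≤ (C1 + C2 + C3 + C4 + C5) * δ := by nlinarith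
      · have hfun2 : (fun s => deriv (fun r => (δ ^ 2 * πε (r, x) + K δ r) ^ α) s)
            =ᶠ[𝓝 t] fun s => P1 (δ, s, y) := by
          have hev : ∀ᶠ s in 𝓝 t, ((δ, s) : ℝ × ℝ) ∈ Ω₂ := by
            have hcont : ContinuousAt (fun s : ℝ => ((δ, s) : ℝ × ℝ)) t := by fun_prop
            exact hcont (hΩ₂open.mem_nhds hq)
          filter_upwards [hev] with s hs
          rw [hfun1]
          exact (hPslice (δ, s, y) hs).deriv
        rw [hfun2.deriv_eq]
        have hde : deriv (fun s => P1 (δ, s, y)) t = P2 (δ, t, y) := (hP1slice (δ, t, y) hq).deriv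
        rw [hde]
        have h1 : |P2 (δ, t, y) - P2 (0, t, y)| ≤ C5 * δ := hC5 δ (t, y) hzR (le_of_lt hδpos)
        rw [hP2zero t htIoo y, sub_zero] at h1
        calc |P2 (δ, t, y)| ≤ C5 * δ := h1
          _ ≤ (C1 + C2 + C3 + C4 + C5) * δ := by nlinarith
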